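/- For every positive integer n, ∑_{k=1}^n lcm(k,n) = (n/2)·(1 + ∑_{d∣n} d·φ(d)). -/

import Mathlib

open Finset

lemma coprime_set_eq (d : ℕ) (hd : 2 ≤ d) :
    (Finset.Icc 1 d).filter (fun m => Nat.Coprime m d) =
      (Finset.range d).filter d.Coprime := by
  ext m
  simp only [mem_filter, mem_Icc, mem_range]
  constructor
  · rintro ⟨⟨h1, h2⟩, hc⟩
    refine ⟨lt_of_le_of_ne h2 ?_, hc.symm⟩
    rintro rfl
    simp [Nat.Coprime, Nat.gcd_self] at hc
    omega
  · rintro ⟨h1, hc⟩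
    have hm : m ≠ 0 := by
      rintro rfl
      have : d = 1 := by simpa [Nat.Coprime] using hc
      omega
    exact ⟨⟨by omega, by omega⟩, hc.symm⟩

lemma two_mul_sum_coprime (d : ℕ) (hd : 0 < d) :
    2 * ∑ m ∈ (Finset.Icc 1 d).filter (fun m => Nat.Coprime m d), m
      = d * d.totient + (if d = 1 then 1 else 0) := by
  rcases eq_or_lt_of_le (Nat.succ_le_of_lt hd) with h1 | h2
  · subst h1
    decide
  · have hd2 : 2 ≤ d := h2
    simp only [if_neg (by omega : d ≠ 1), add_zero]
    set s := (Finset.Icc 1 d).filter (fun m => Nat.Coprime m d) with hs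
    have hmem : ∀ m ∈ s, 1 ≤ m ∧ m < d ∧ Nat.Coprime m d := by
      intro m hm
      rw [hs, coprime_set_eq d hd2] at hm
      simp only [mem_filter, mem_range] at hm
      have hm0 : m ≠ 0 := by
        rintro rfl
        have : d = 1 := by simpa [Nat.Coprime] using hm.2
        omega
      exact ⟨by omega, hm.1, hm.2.symm⟩
    have hrefl : ∑ m ∈ s, m = ∑ m ∈ s, (d - m) := by
      apply Finset.sum_nbij' (fun m => d - m) (fun m => d - m)
      · intro m hm
        obtain ⟨h1, h2, h3⟩ := hmem m hm
        rw [hs]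
        simp only [mem_filter, mem_Icc]
        refine ⟨⟨by omega, by omega⟩, ?_⟩
        exact (Nat.coprime_self_sub_left (le_of_lt h2)).mpr h3
      · intro m hm
        obtain ⟨h1, h2, h3⟩ := hmem m hm
        rw [hs]
        simp only [mem_filter, mem_Icc]
        refine ⟨⟨by omega, by omega⟩, ?_⟩
        exact (Nat.coprime_self_sub_left (le_of_lt h2)).mpr h3
      · intro m hm; obtain ⟨h1, h2, _⟩ := hmem m hm; omega
      · intro m hm; obtain ⟨h1, h2, _⟩ := hmem m hm; omega
      · intro m hm
        obtain ⟨h1, h2, _⟩ := hmem m hm; omega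
    have hcard : s.card = d.totient := by
      rw [hs, coprime_set_eq d hd2, Nat.totient_eq_card_coprime]
    calc 2 * ∑ m ∈ s, m = (∑ m ∈ s, m) + ∑ m ∈ s, (d - m) := by
          rw [← hrefl]; ring
      _ = ∑ m ∈ s, (m + (d - m)) := by rw [Finset.sum_add_distrib]
      _ = ∑ m ∈ s, d := by
          apply Finset.sum_congr rfl
          intro m hm; obtain ⟨_, h2, _⟩ := hmem m hm; omega
      _ = d * d.totient := by rw [Finset.sum_const, hcard, smul_eq_mul, mul_comm]

theorem lcm_sum_eq (n : ℕ) (hn : 0 < n) :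
    (∑ k ∈ Finset.Icc 1 n, (Nat.lcm k n : ℝ)) =
      (n : ℝ) / 2 * (1 + ∑ d ∈ n.divisors, (d : ℝ) * Nat.totient d) := by
  have key : ∑ k ∈ Finset.Icc 1 n, (Nat.lcm k n : ℝ)
      = ∑ d ∈ n.divisors, ∑ m ∈ (Finset.Icc 1 d).filter (fun m => Nat.Coprime m d),
          ((n : ℝ) * m) := by
    rw [Finset.sum_sigma']
    apply Finset.sum_nbij' (fun k => (⟨n / Nat.gcd k n, k / Nat.gcd k n⟩ :
        (Σ _d : ℕ, ℕ))) (fun p => p.2 * (n / p.1))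
    · intro k hk
      simp only [mem_Icc] at hk
      have hg : 0 < Nat.gcd k n := Nat.gcd_pos_of_pos_right _ hn
      have hgd : Nat.gcd k n ∣ n := Nat.gcd_dvd_right _ _
      have hgk : Nat.gcd k n ∣ k := Nat.gcd_dvd_left _ _
      simp only [Finset.mem_sigma, Nat.mem_divisors, mem_filter, mem_Icc]
      refine ⟨⟨Nat.div_dvd_of_dvd hgd, hn.ne'⟩, ⟨?_, Nat.div_le_div_right hk.2⟩, ?_⟩
      · exact Nat.one_le_div_iff hg |>.mpr (Nat.le_of_dvd (by omega) hgk)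
      · exact Nat.coprime_div_gcd_div_gcd hg
    · intro p hp
      simp only [Finset.mem_sigma, Nat.mem_divisors, mem_filter, mem_Icc] at hp
      obtain ⟨⟨hd, _⟩, ⟨hm1, hm2⟩, hc⟩ := hp
      have hq : 0 < n / p.1 := Nat.div_pos (Nat.le_of_dvd hn hd)
        (Nat.pos_of_dvd_of_pos hd hn)
      simp only [mem_Icc]
      constructor
      · exact Nat.one_le_iff_ne_zero.mpr (by positivity)
      · calc p.2 * (n / p.1) ≤ p.1 * (n / p.1) := Nat.mul_le_mul_right _ hm2
          _ = n := Nat.mul_div_cancel' hd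
    · intro k hk
      simp only [mem_Icc] at hk
      have hg : 0 < Nat.gcd k n := Nat.gcd_pos_of_pos_right _ hn
      have hgd : Nat.gcd k n ∣ n := Nat.gcd_dvd_right _ _
      have hgk : Nat.gcd k n ∣ k := Nat.gcd_dvd_left _ _
      simp only
      rw [Nat.div_div_self hgd hn.ne', Nat.div_mul_cancel hgk]
    · intro p hp
      simp only [Finset.mem_sigma, Nat.mem_divisors, mem_filter, mem_Icc] at hp
      obtain ⟨⟨hd, _⟩, ⟨hm1, hm2⟩, hc⟩ := hp
      have hq : 0 < n / p.1 := Nat.div_pos (Nat.le_of_dvd hn hd)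
        (Nat.pos_of_dvd_of_pos hd hn)
      have hgcd : Nat.gcd (p.2 * (n / p.1)) n = n / p.1 := by
        have h1 : Nat.gcd (p.2 * (n / p.1)) (p.1 * (n / p.1)) = n / p.1 := by
          rw [Nat.gcd_mul_right, hc, one_mul]
        rwa [Nat.mul_div_cancel' hd] at h1
      ext
      · simp only [hgcd]
        rw [Nat.div_div_self hd hn.ne']
      · simp only [hgcd]
        rw [Nat.mul_div_cancel _ hq]
    · intro k hk
      simp only [mem_Icc] at hk
      have hg : 0 < Nat.gcd k n := Nat.gcd_pos_of_pos_right _ hn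
      have hgk : Nat.gcd k n ∣ k := Nat.gcd_dvd_left _ _
      have : Nat.lcm k n = n * (k / Nat.gcd k n) := by
        rw [Nat.lcm, mul_comm k n, Nat.mul_div_assoc n hgk]
      rw [this]
      push_cast
      ring
  rw [key]
  have step : ∀ d ∈ n.divisors,
      ∑ m ∈ (Finset.Icc 1 d).filter (fun m => Nat.Coprime m d), ((n : ℝ) * m)
        = (n : ℝ) * (((d : ℝ) * d.totient + (if d = 1 then 1 else 0)) / 2) := by
    intro d hd
    have hd0 : 0 < d := Nat.pos_of_mem_divisors hd
    have h2 := two_mul_sum_coprime d hd0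
    have h2R : (2 : ℝ) * ∑ m ∈ (Finset.Icc 1 d).filter (fun m => Nat.Coprime m d), (m : ℝ)
        = (d : ℝ) * d.totient + (if d = 1 then 1 else 0) := by
      have := congrArg (Nat.cast (R := ℝ)) h2
      push_cast at this
      split_ifs with h <;> simp_all
    rw [← Finset.mul_sum]
    rw [show ∑ m ∈ (Finset.Icc 1 d).filter (fun m => Nat.Coprime m d), (m : ℝ)
        = ((d : ℝ) * d.totient + (if d = 1 then 1 else 0)) / 2 by linarith]
  rw [Finset.sum_congr rfl step]
  rw [← Finset.mul_sum]
  have hsplit : ∑ d ∈ n.divisors, (((d : ℝ) * d.totient + (if d = 1 then 1 else 0)) / 2)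
      = ((∑ d ∈ n.divisors, (d : ℝ) * d.totient) + 1) / 2 := by
    rw [← Finset.sum_div, Finset.sum_add_distrib]
    congr 2
    rw [Finset.sum_ite_eq' n.divisors 1 (fun _ => (1:ℝ))]
    simp [Nat.one_mem_divisors.mpr hn.ne']
  rw [hsplit]
  ring
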